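/- Let T = K[x,y,z] be ℤ²-graded with deg(x) = e₁, deg(y) = −e₁, deg(z) = e₂, and let S = T/((xy−1)z²) with the induced grading. Then the image of z in S is relevant (since z² = xyz² in S), but z is not the image under T → S of any relevant element of T. -/

import Mathlib

open MvPolynomial

/-- A homogeneous element `f` of a ring with pieces indexed by `D` is *relevant* if some
power `f^n` (`n ≥ 1`) factors into homogeneous elements whose degrees generate a
finite-index subgroup of `D`. -/
def Relevant {D A : Type*} [AddCommGroup D] [CommRing A]
    (𝒜 : D → AddSubgroup A) (f : A) : Prop :=
  (∃ d, f ∈ 𝒜 d) ∧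
    ∃ n : ℕ, 1 ≤ n ∧ ∃ (ℓ : ℕ) (g : Fin ℓ → A) (e : Fin ℓ → D),
      (∀ i, g i ∈ 𝒜 (e i)) ∧ f ^ n = ∏ i, g i ∧
      (AddSubgroup.closure (Set.range e)).FiniteIndex

noncomputable section

variable (K : Type*) [Field K]

/-- The weights: `deg x = e₁`, `deg y = -e₁`, `deg z = e₂`, the variables `x, y, z`
being `X 0, X 1, X 2` of `T = K[x,y,z]`. -/
def w12 : Fin 3 → ℤ × ℤ := ![(1, 0), (-1, 0), (0, 1)]

/-- The `ℤ²`-grading on `T = K[x,y,z]`. -/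
def gradingT (d : ℤ × ℤ) : AddSubgroup (MvPolynomial (Fin 3) K) :=
  (weightedHomogeneousSubmodule K (w12) d).toAddSubgroup

/-- The ideal `((xy - 1)z²)`; its generator is homogeneous of degree `2e₂`. -/
abbrev I12 : Ideal (MvPolynomial (Fin 3) K) :=
  Ideal.span {(X 0 * X 1 - 1) * X 2 ^ 2}

/-- The ring `S = T/((xy - 1)z²)`. -/
abbrev Ring12 := MvPolynomial (Fin 3) K ⧸ I12 K

/-- The induced `ℤ²`-grading on `S`. -/
def gradingS (d : ℤ × ℤ) : AddSubgroup (Ring12 K) :=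
  AddSubgroup.map (Ideal.Quotient.mk (I12 K)).toAddMonoidHom (gradingT K d)

end

/-! ### Auxiliary lemmas -/

lemma weight_w12 (m : Fin 3 →₀ ℕ) :
    Finsupp.weight w12 m = ((m 0 : ℤ) - m 1, (m 2 : ℤ)) := by
  rw [Finsupp.weight_apply, Finsupp.sum_fintype _ _ (by intro i; simp)]
  rw [Fin.sum_univ_three]
  simp [w12, Prod.ext_iff]
  omega

lemma finsupp_eq3 {m m' : Fin 3 →₀ ℕ} (h0 : m 0 = m' 0) (h1 : m 1 = m' 1)
    (h2 : m 2 = m' 2) : m = m' := by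
  ext i
  fin_cases i <;> assumption

lemma coeff_aeval0 {K : Type*} [Field K] {g : MvPolynomial (Fin 3) K} {d : ℤ × ℤ}
    (hg : g.IsWeightedHomogeneous w12 d) {m : Fin 3 →₀ ℕ} (hm : MvPolynomial.coeff m g ≠ 0) :
    (((aeval ![Polynomial.C Polynomial.X, 1, Polynomial.X] g :
        Polynomial (Polynomial K)).coeff (m 2)).coeff (m 0)) = MvPolynomial.coeff m g := by
  set F : Fin 3 → Polynomial (Polynomial K) := ![Polynomial.C Polynomial.X, 1, Polynomial.X]
  have hterm : ∀ v ∈ g.support,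
      (((MvPolynomial.aeval F) ((MvPolynomial.monomial v) (MvPolynomial.coeff v g))).coeff
          (m 2)).coeff (m 0)
        = if m 2 = v 2 ∧ m 0 = v 0 then MvPolynomial.coeff v g else 0 := by
    intro v _
    rw [MvPolynomial.aeval_monomial, Finsupp.prod_fintype _ _ (fun i => pow_zero _),
      Fin.prod_univ_three]
    simp only [F, Matrix.cons_val_zero, Matrix.cons_val_one, Matrix.head_cons,
      Matrix.cons_val_two, Matrix.tail_cons, one_pow, mul_one,
      Polynomial.algebraMap_apply, Polynomial.algebraMap_eq, ← Polynomial.C_pow]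
    simp only [← mul_assoc, ← Polynomial.C_mul, Polynomial.coeff_C_mul,
      Polynomial.coeff_X_pow, mul_ite, mul_one, mul_zero,
      apply_ite (fun p : Polynomial K => p.coeff (m 0)), Polynomial.coeff_zero]
    split_ifs with h1 h2 h3 h4 <;> simp_all
  conv_lhs => rw [g.as_sum, map_sum]
  rw [Polynomial.finset_sum_coeff, Polynomial.finset_sum_coeff,
    Finset.sum_congr rfl hterm, Finset.sum_eq_single m
      (fun v hv hne => ?_) (fun hns => absurd (MvPolynomial.mem_support_iff.2 hm) hns)]
  · simp
  · rw [if_neg]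
    rintro ⟨h2, h0⟩
    have hvw := hg (MvPolynomial.mem_support_iff.1 hv)
    have hmw := hg hm
    rw [weight_w12] at hvw hmw
    rw [← hvw, Prod.ext_iff] at hmw
    have h1 : v 1 = m 1 := by omega
    exact hne (finsupp_eq3 h0.symm h1 h2.symm)

lemma coeff_aeval1 {K : Type*} [Field K] {g : MvPolynomial (Fin 3) K} {d : ℤ × ℤ}
    (hg : g.IsWeightedHomogeneous w12 d) {m : Fin 3 →₀ ℕ} (hm : MvPolynomial.coeff m g ≠ 0) :
    (((aeval ![1, Polynomial.C Polynomial.X, Polynomial.X] g :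
        Polynomial (Polynomial K)).coeff (m 2)).coeff (m 1)) = MvPolynomial.coeff m g := by
  set F : Fin 3 → Polynomial (Polynomial K) := ![1, Polynomial.C Polynomial.X, Polynomial.X]
  have hterm : ∀ v ∈ g.support,
      (((MvPolynomial.aeval F) ((MvPolynomial.monomial v) (MvPolynomial.coeff v g))).coeff
          (m 2)).coeff (m 1)
        = if m 2 = v 2 ∧ m 1 = v 1 then MvPolynomial.coeff v g else 0 := by
    intro v _
    rw [MvPolynomial.aeval_monomial, Finsupp.prod_fintype _ _ (fun i => pow_zero _),
      Fin.prod_univ_three]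
    simp only [F, Matrix.cons_val_zero, Matrix.cons_val_one, Matrix.head_cons,
      Matrix.cons_val_two, Matrix.tail_cons, one_pow, one_mul,
      Polynomial.algebraMap_apply, Polynomial.algebraMap_eq, ← Polynomial.C_pow]
    simp only [← mul_assoc, ← Polynomial.C_mul, Polynomial.coeff_C_mul,
      Polynomial.coeff_X_pow, mul_ite, mul_one, mul_zero,
      apply_ite (fun p : Polynomial K => p.coeff (m 1)), Polynomial.coeff_zero]
    split_ifs with h1 h2 h3 h4 <;> simp_all
  conv_lhs => rw [g.as_sum, map_sum]
  rw [Polynomial.finset_sum_coeff, Polynomial.finset_sum_coeff,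
    Finset.sum_congr rfl hterm, Finset.sum_eq_single m
      (fun v hv hne => ?_) (fun hns => absurd (MvPolynomial.mem_support_iff.2 hm) hns)]
  · simp
  · rw [if_neg]
    rintro ⟨h2, h1⟩
    have hvw := hg (MvPolynomial.mem_support_iff.1 hv)
    have hmw := hg hm
    rw [weight_w12] at hvw hmw
    rw [← hvw, Prod.ext_iff] at hmw
    have h0 : v 0 = m 0 := by omega
    exact hne (finsupp_eq3 h0 h1.symm h2.symm)

/-- A nonzero homogeneous divisor of `z^n` has degree in `ℤ·e₂`. -/
lemma fst_eq_zero_of_dvd {K : Type*} [Field K] {g : MvPolynomial (Fin 3) K} {d : ℤ × ℤ} {n : ℕ}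
    (hg : g.IsWeightedHomogeneous w12 d) (h0 : g ≠ 0)
    (hdvd : g ∣ (X 2 : MvPolynomial (Fin 3) K) ^ n) :
    d.1 = 0 := by
  obtain ⟨m, hm⟩ := MvPolynomial.ne_zero_iff.1 h0
  have hd : Finsupp.weight w12 m = d := hg hm
  have key : ∀ F : Fin 3 → Polynomial (Polynomial K), F 2 = Polynomial.X →
      ∀ j : ℕ, (((aeval F g : Polynomial (Polynomial K)).coeff (m 2)).coeff j) ≠ 0 → j = 0 := by
    intro F hF2 j hj
    have hdvd' : (aeval F g : Polynomial (Polynomial K)) ∣ Polynomial.X ^ n := by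
      have := map_dvd (MvPolynomial.aeval F) hdvd
      rwa [map_pow, MvPolynomial.aeval_X, hF2] at this
    obtain ⟨k, -, hassoc⟩ := (dvd_prime_pow Polynomial.prime_X n).1 hdvd'
    obtain ⟨u, hu⟩ := hassoc.symm
    obtain ⟨c, hcu, hc⟩ := Polynomial.isUnit_iff.1 u.isUnit
    obtain ⟨c0, -, hc0⟩ := Polynomial.isUnit_iff.1 hcu
    rw [← hu, ← hc, ← hc0] at hj
    rw [mul_comm, Polynomial.coeff_C_mul, Polynomial.coeff_X_pow] at hj
    by_contra hjne
    apply hj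
    split_ifs with h
    · rw [mul_one, Polynomial.coeff_C, if_neg hjne]
    · rw [mul_zero, Polynomial.coeff_zero]
  have h00 : m 0 = 0 := by
    apply key ![Polynomial.C Polynomial.X, 1, Polynomial.X] rfl
    rw [coeff_aeval0 hg hm]; exact hm
  have h11 : m 1 = 0 := by
    apply key ![1, Polynomial.C Polynomial.X, Polynomial.X] rfl
    rw [coeff_aeval1 hg hm]; exact hm
  rw [weight_w12] at hd
  rw [← hd]
  simp [h00, h11]

lemma memX (K : Type*) [Field K] (i : Fin 3) :
    (X i : MvPolynomial (Fin 3) K) ∈ gradingT K (w12 i) :=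
  isWeightedHomogeneous_X K w12 i

lemma coeff_gen {K : Type*} [Field K] (p : MvPolynomial (Fin 3) K) (m : Fin 3 →₀ ℕ)
    (h : m 2 < 2) : MvPolynomial.coeff m ((X 0 * X 1 - 1) * X 2 ^ 2 * p) = 0 := by
  have heq : (X 0 * X 1 - 1) * X 2 ^ 2 * p =
      MvPolynomial.monomial (Finsupp.single 2 2) (1 : K) * ((X 0 * X 1 - 1) * p) := by
    rw [← MvPolynomial.X_pow_eq_monomial]; ring
  rw [heq, MvPolynomial.coeff_monomial_mul', if_neg]
  rw [Finsupp.single_le_iff]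
  omega

/-- In `S = K[x,y,z]/((xy-1)z²)` with `deg x = e₁`, `deg y = -e₁`,
`deg z = e₂`, the image of `z` is relevant, but `z` is not the image of any relevant
element of `T = K[x,y,z]`. -/
theorem stmt_12 (K : Type*) [Field K] :
    Relevant (gradingS K) (Ideal.Quotient.mk (I12 K) (X 2)) ∧
      ∀ t : MvPolynomial (Fin 3) K, Relevant (gradingT K) t →
        Ideal.Quotient.mk (I12 K) t ≠ Ideal.Quotient.mk (I12 K) (X 2) := by
  constructor
  · -- the image of z is relevant
    refine ⟨⟨(0, 1), AddSubgroup.mem_map.2 ⟨X 2, ?_, rfl⟩⟩, 2, one_le_two, 4,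
      ![Ideal.Quotient.mk (I12 K) (X 0), Ideal.Quotient.mk (I12 K) (X 1),
        Ideal.Quotient.mk (I12 K) (X 2), Ideal.Quotient.mk (I12 K) (X 2)],
      ![(1, 0), (-1, 0), (0, 1), (0, 1)], ?_, ?_, ?_⟩
    · exact memX K 2
    · intro i
      fin_cases i
      · exact AddSubgroup.mem_map.2 ⟨X 0, memX K 0, rfl⟩
      · exact AddSubgroup.mem_map.2 ⟨X 1, memX K 1, rfl⟩
      · exact AddSubgroup.mem_map.2 ⟨X 2, memX K 2, rfl⟩
      · exact AddSubgroup.mem_map.2 ⟨X 2, memX K 2, rfl⟩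
    · rw [Fin.prod_univ_four]
      simp only [Matrix.cons_val_zero, Matrix.cons_val_one, Matrix.head_cons,
        Matrix.cons_val_two, Matrix.tail_cons, Matrix.cons_val_three]
      rw [← map_pow, ← map_mul, ← map_mul, ← map_mul, Ideal.Quotient.eq,
        Ideal.mem_span_singleton]
      exact ⟨-1, by ring⟩
    · have htop : AddSubgroup.closure
          (Set.range ![((1 : ℤ), (0 : ℤ)), (-1, 0), (0, 1), (0, 1)]) = ⊤ := by
        rw [eq_top_iff]
        rintro ⟨a, b⟩ -
        have h1 : ((1 : ℤ), (0 : ℤ)) ∈ AddSubgroup.closure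
            (Set.range ![((1 : ℤ), (0 : ℤ)), (-1, 0), (0, 1), (0, 1)]) :=
          AddSubgroup.subset_closure ⟨0, rfl⟩
        have h2 : ((0 : ℤ), (1 : ℤ)) ∈ AddSubgroup.closure
            (Set.range ![((1 : ℤ), (0 : ℤ)), (-1, 0), (0, 1), (0, 1)]) :=
          AddSubgroup.subset_closure ⟨2, rfl⟩
        have := AddSubgroup.add_mem _ (AddSubgroup.zsmul_mem _ h1 a)
          (AddSubgroup.zsmul_mem _ h2 b)
        simpa [Prod.ext_iff] using this
      rw [htop]
      exact ⟨by simp [AddSubgroup.index_top]⟩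
  · -- z lifts only to z, and z is not relevant in T
    intro t ht heq
    obtain ⟨⟨dd, hd⟩, n, hn1, l, g, e, hmem, hprod, hfin⟩ := ht
    have hdt : IsWeightedHomogeneous w12 t dd := hd
    rw [Ideal.Quotient.eq, Ideal.mem_span_singleton] at heq
    obtain ⟨h, hh⟩ := heq
    have ht2 : t = X 2 + (X 0 * X 1 - 1) * X 2 ^ 2 * h := by linear_combination hh
    have hc1 : MvPolynomial.coeff (Finsupp.single 2 1) t = 1 := by
      rw [ht2, MvPolynomial.coeff_add, coeff_gen _ _ (by simp), MvPolynomial.coeff_X, add_zero, if_pos rfl]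
    have hd1 : dd = (0, 1) := by
      have := hdt (by rw [hc1]; exact one_ne_zero)
      rw [weight_w12] at this
      rw [← this]
      simp
    have hq0 : (X 0 * X 1 - 1) * X 2 ^ 2 * h = 0 := by
      by_contra hq
      obtain ⟨m, hm⟩ := MvPolynomial.ne_zero_iff.1 hq
      have hm2 : 2 ≤ m 2 := by
        by_contra hlt
        exact hm (coeff_gen h m (by omega))
      have hmt : MvPolynomial.coeff m t ≠ 0 := by
        rw [ht2, MvPolynomial.coeff_add]
        have hz : MvPolynomial.coeff m (X 2 : MvPolynomial (Fin 3) K) = 0 := by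
          rw [MvPolynomial.coeff_X', if_neg]
          intro hcontra
          apply_fun (fun f => f 2) at hcontra
          simp [Finsupp.single_apply] at hcontra
          omega
        rw [hz, zero_add]
        exact hm
      have := hdt hmt
      rw [weight_w12, hd1, Prod.ext_iff] at this
      simp at this
      omega
    rw [hq0, add_zero] at ht2
    subst ht2
    -- z is not relevant in T
    have hne : (X 2 : MvPolynomial (Fin 3) K) ^ n ≠ 0 :=
      pow_ne_zero _ (MvPolynomial.X_ne_zero 2)
    rw [hprod] at hne
    have hfst : ∀ i, (e i).1 = 0 := by
      intro i
      have hgni : g i ≠ 0 := Finset.prod_ne_zero_iff.1 hne i (Finset.mem_univ i)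
      have hgdvd : g i ∣ (X 2 : MvPolynomial (Fin 3) K) ^ n :=
        hprod ▸ Finset.dvd_prod_of_mem g (Finset.mem_univ i)
      exact fst_eq_zero_of_dvd (hmem i) hgni hgdvd
    have hle : AddSubgroup.closure (Set.range e) ≤ (AddMonoidHom.fst ℤ ℤ).ker := by
      rw [AddSubgroup.closure_le]
      rintro x ⟨i, rfl⟩
      simp only [SetLike.mem_coe, AddMonoidHom.mem_ker, AddMonoidHom.coe_fst]
      exact hfst i
    have hker : ((AddMonoidHom.fst ℤ ℤ).ker).index = 0 := by
      rw [AddSubgroup.index_ker]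
      have hsurj : Function.Surjective (AddMonoidHom.fst ℤ ℤ) := Prod.fst_surjective
      rw [AddMonoidHom.range_eq_top.2 hsurj]
      rw [Nat.card_congr AddSubgroup.topEquiv.toEquiv]
      exact Nat.card_eq_zero_of_infinite
    have hidx : (AddSubgroup.closure (Set.range e)).index = 0 :=
      eq_zero_of_zero_dvd (hker ▸ AddSubgroup.index_dvd_of_le hle)
    exact hfin.index_ne_zero hidx
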